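/- Let C be a real nonnegative symmetric n×n matrix with zero diagonal whose off-diagonal entries satisfy the Gomory-Hu triangle inequality, and let M be its maximum entry. If the energy of C equals 2(n−1)M and M > 0, then C = M(J − I), where J is the all-ones matrix and I the identity. -/

import Mathlib

open Matrix Finset in
private lemma equiv_qf_stmt9 {V : Type*} [Fintype V] [DecidableEq V] (r : V → V → Prop)
    [DecidableRel r]
    (hsymm : ∀ v w, r v w → r w v) (htrans : ∀ u v w, r u v → r v w → r u w)
    (hrefl : ∀ v, r v v) (x : V → ℝ) :
    0 ≤ ∑ v, ∑ w, (if r v w then (1:ℝ) else 0) * x v * x w := by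
  classical
  set f : V → Finset V := fun v => Finset.univ.filter (fun w => r v w) with hf
  have hiff : ∀ v w, r v w ↔ f v = f w := by
    intro v w
    constructor
    · intro h
      ext u
      simp only [hf, mem_filter, mem_univ, true_and]
      exact ⟨fun hvu => htrans _ _ _ (hsymm _ _ h) hvu, fun hwu => htrans _ _ _ h hwu⟩
    · intro h
      have : w ∈ f w := by simp [hf, hrefl]
      rw [← h] at this
      simpa [hf] using this
  set S : Finset V → ℝ := fun c => ∑ w, if f w = c then x w else 0 with hS
  have key : ∑ v, ∑ w, (if r v w then (1:ℝ) else 0) * x v * x w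
      = ∑ c : Finset V, S c ^ 2 := by
    have h1 : ∀ v, ∑ w, (if r v w then (1:ℝ) else 0) * x v * x w = x v * S (f v) := by
      intro v
      rw [hS, Finset.mul_sum]
      apply Finset.sum_congr rfl
      intro w _
      by_cases h : r v w
      · rw [if_pos h, if_pos ((hiff v w).mp h).symm]; ring
      · rw [if_neg h, if_neg (fun he => h ((hiff v w).mpr he.symm))]; ring
    rw [Finset.sum_congr rfl (fun v _ => h1 v)]
    rw [← Finset.sum_fiberwise Finset.univ f (fun v => x v * S (f v))]
    apply Finset.sum_congr rfl
    intro c _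
    rw [pow_two, hS]
    rw [Finset.sum_filter]
    rw [Finset.sum_congr rfl (fun v _ => by
      by_cases h : f v = c
      · simp [h]
      · simp [h] : ∀ v ∈ Finset.univ, (if f v = c then x v * S (f v) else 0) = (if f v = c then x v else 0) * S c)]
    rw [← Finset.sum_mul]
  rw [key]
  exact Finset.sum_nonneg fun c _ => sq_nonneg _

open Matrix Finset in
private lemma qf_lb_stmt9 {V : Type*} [Fintype V] [DecidableEq V] :
    ∀ (k : ℕ) (C : Matrix V V ℝ) (M : ℝ),
    ((Finset.univ.image (fun p : V × V => C p.1 p.2)).filter (fun t => 0 < t)).card ≤ k →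
    (∀ v w, C v w = C w v) → (∀ v, C v v = 0) → (∀ v w, 0 ≤ C v w) →
    (∀ x y z : V, x ≠ y → y ≠ z → x ≠ z → min (C x y) (C y z) ≤ C x z) →
    (∀ v w, C v w ≤ M) → 0 ≤ M →
    ∀ x : V → ℝ, -(M * ∑ v, x v ^ 2) ≤ ∑ v, ∑ w, C v w * x v * x w := by
  intro k
  induction k with
  | zero =>
    intro C M hcard hsymm hdiag hnn hGH hub hM x
    have hzero : ∀ v w, C v w = 0 := by
      intro v w
      by_contra h
      have hpos : 0 < C v w := lt_of_le_of_ne (hnn v w) (Ne.symm h)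
      have hmem : C v w ∈ (Finset.univ.image (fun p : V × V => C p.1 p.2)).filter (fun t => 0 < t) := by
        simp only [mem_filter, mem_image, mem_univ, true_and]
        exact ⟨⟨(v, w), rfl⟩, hpos⟩
      have := Finset.card_pos.mpr ⟨_, hmem⟩
      omega
    have h0 : ∑ v, ∑ w, C v w * x v * x w = 0 := by
      apply Finset.sum_eq_zero; intro v _
      apply Finset.sum_eq_zero; intro w _
      rw [hzero v w]; ring
    rw [h0]
    have : 0 ≤ M * ∑ v, x v ^ 2 :=
      mul_nonneg hM (Finset.sum_nonneg fun v _ => sq_nonneg _)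
    linarith
  | succ k ih =>
    intro C M hcard hsymm hdiag hnn hGH hub hM x
    set P := (Finset.univ.image (fun p : V × V => C p.1 p.2)).filter (fun t => 0 < t) with hP
    by_cases hne : P.Nonempty
    case neg =>
      have hc0 : P.card = 0 := by
        rw [Finset.card_eq_zero]
        exact Finset.not_nonempty_iff_eq_empty.mp hne
      refine ih C M ?_ hsymm hdiag hnn hGH hub hM x
      rw [← hP, hc0]; omega
    case pos =>
    set t := P.min' hne with ht
    have htP : t ∈ P := P.min'_mem hne
    have htpos : 0 < t := (Finset.mem_filter.mp htP).2
    have htval : ∃ v w : V, C v w = t := by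
      have h1 := (Finset.mem_filter.mp htP).1
      simp only [mem_image, mem_univ, true_and] at h1
      obtain ⟨p, hp⟩ := h1
      exact ⟨p.1, p.2, hp⟩
    have htM : t ≤ M := by obtain ⟨v, w, hvw⟩ := htval; rw [← hvw]; exact hub v w
    have hmin : ∀ v w, 0 < C v w → t ≤ C v w := by
      intro v w h
      apply P.min'_le
      simp only [hP, mem_filter, mem_image, mem_univ, true_and]
      exact ⟨⟨(v, w), rfl⟩, h⟩
    set C' : Matrix V V ℝ := Matrix.of (fun v w => if v ≠ w ∧ 0 < C v w then C v w - t else 0) with hC'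
    have hC'app : ∀ v w, C' v w = if v ≠ w ∧ 0 < C v w then C v w - t else 0 := fun v w => rfl
    have hsymm' : ∀ v w, C' v w = C' w v := by
      intro v w
      rw [hC'app, hC'app, hsymm v w]
      by_cases h : v = w
      · simp [h]
      · simp [h, Ne.symm h]
    have hdiag' : ∀ v, C' v v = 0 := by intro v; rw [hC'app]; simp
    have hnn' : ∀ v w, 0 ≤ C' v w := by
      intro v w; rw [hC'app]
      split
      · rename_i h; linarith [hmin v w h.2]
      · exact le_refl _
    have hub' : ∀ v w, C' v w ≤ M - t := by
      intro v w; rw [hC'app]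
      split
      · linarith [hub v w]
      · linarith
    have hGH' : ∀ a b c : V, a ≠ b → b ≠ c → a ≠ c → min (C' a b) (C' b c) ≤ C' a c := by
      intro a b c hab hbc hac
      have hg := hGH a b c hab hbc hac
      rw [hC'app, hC'app, hC'app]
      by_cases h1 : 0 < C a b
      · by_cases h2 : 0 < C b c
        · have h3 : 0 < C a c := lt_of_lt_of_le (lt_min h1 h2) hg
          rw [if_pos ⟨hab, h1⟩, if_pos ⟨hbc, h2⟩, if_pos ⟨hac, h3⟩]
          rcases le_total (C a b) (C b c) with h | h
          · rw [min_eq_left (by linarith)]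
            rw [min_eq_left h] at hg; linarith
          · rw [min_eq_right (by linarith)]
            rw [min_eq_right h] at hg; linarith
        · rw [if_neg (show ¬(b ≠ c ∧ 0 < C b c) from fun h => h2 h.2)]
          refine le_trans (min_le_right _ _) ?_
          split
          · rename_i h; linarith [hmin a c h.2]
          · linarith
      · rw [if_neg (show ¬(a ≠ b ∧ 0 < C a b) from fun h => h1 h.2)]
        refine le_trans (min_le_left _ _) ?_
        split
        · rename_i h; linarith [hmin a c h.2]
        · linarith
    have hsub : (Finset.univ.image (fun p : V × V => C' p.1 p.2)).filter (fun s => 0 < s)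
        ⊆ (P.image (fun a => a - t)).erase 0 := by
      intro a ha
      simp only [mem_filter, mem_image, mem_univ, true_and] at ha
      obtain ⟨⟨p, hp⟩, hapos⟩ := ha
      rw [Finset.mem_erase]
      refine ⟨ne_of_gt hapos, ?_⟩
      rw [Finset.mem_image]
      rw [hC'app] at hp
      by_cases h : p.1 ≠ p.2 ∧ 0 < C p.1 p.2
      · rw [if_pos h] at hp
        refine ⟨C p.1 p.2, ?_, hp⟩
        rw [hP]; simp only [mem_filter, mem_image, mem_univ, true_and]
        exact ⟨⟨p, rfl⟩, h.2⟩
      · rw [if_neg h] at hp; rw [← hp] at hapos; exact absurd hapos (lt_irrefl 0)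
    have hcard' : ((Finset.univ.image (fun p : V × V => C' p.1 p.2)).filter (fun s => 0 < s)).card ≤ k := by
      have h0mem : (0:ℝ) ∈ P.image (fun a => a - t) := by
        rw [Finset.mem_image]; exact ⟨t, htP, sub_self t⟩
      have h1 := Finset.card_le_card hsub
      rw [Finset.card_erase_of_mem h0mem] at h1
      have h2 := Finset.card_image_le (s := P) (f := fun a => a - t)

      omega
    have hrec := ih C' (M - t) hcard' hsymm' hdiag' hnn' hGH' hub' (by linarith) x
    have hQ : 0 ≤ ∑ v, ∑ w, (if (v = w ∨ 0 < C v w) then (1:ℝ) else 0) * x v * x w := by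
      apply @equiv_qf_stmt9 V _ _ (fun v w => v = w ∨ 0 < C v w) (fun v w => inferInstance)
      · intro v w h
        rcases h with h | h
        · exact Or.inl h.symm
        · exact Or.inr (by rw [hsymm w v]; exact h)
      · intro u v w huv hvw
        rcases huv with rfl | h1
        · exact hvw
        rcases hvw with rfl | h2
        · exact Or.inr h1
        by_cases huv' : u = v
        · subst huv'; exact Or.inr h2
        by_cases hvw' : v = w
        · subst hvw'; exact Or.inr h1
        by_cases huw : u = w
        · exact Or.inl huw
        · exact Or.inr (lt_of_lt_of_le (lt_min h1 h2) (hGH u v w huv' hvw' huw))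
      · intro v; exact Or.inl rfl
    have hid : ∀ v w, C v w = C' v w
        + t * (if (v = w ∨ 0 < C v w) then (1:ℝ) else 0)
        - t * (if v = w then (1:ℝ) else 0) := by
      intro v w
      rw [hC'app]
      by_cases hvw : v = w
      · subst hvw; simp [hdiag v]
      · by_cases hpos : 0 < C v w
        · rw [if_pos ⟨hvw, hpos⟩, if_pos (Or.inr hpos), if_neg hvw]; ring
        · have h0 : C v w = 0 := le_antisymm (not_lt.mp hpos) (hnn v w)
          rw [if_neg (show ¬(v ≠ w ∧ 0 < C v w) from fun h => hpos h.2),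
            if_neg (show ¬(v = w ∨ 0 < C v w) by rintro (h | h); exacts [hvw h, hpos h]),
            if_neg hvw, h0]
          ring
    have hdiagsum : ∑ v, ∑ w, (if v = w then (1:ℝ) else 0) * x v * x w = ∑ v, x v ^ 2 := by
      apply Finset.sum_congr rfl
      intro v _
      rw [Finset.sum_eq_single v (fun w _ hw => by rw [if_neg (Ne.symm hw)]; ring)
        (fun h => absurd (Finset.mem_univ v) h)]
      rw [if_pos rfl]; ring
    have hsum : ∑ v, ∑ w, C v w * x v * x w
        = (∑ v, ∑ w, C' v w * x v * x w)
          + t * (∑ v, ∑ w, (if (v = w ∨ 0 < C v w) then (1:ℝ) else 0) * x v * x w)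
          - t * (∑ v, x v ^ 2) := by
      rw [← hdiagsum, Finset.mul_sum, Finset.mul_sum]
      rw [← Finset.sum_add_distrib, ← Finset.sum_sub_distrib]
      apply Finset.sum_congr rfl
      intro v _
      rw [Finset.mul_sum, Finset.mul_sum, ← Finset.sum_add_distrib, ← Finset.sum_sub_distrib]
      apply Finset.sum_congr rfl
      intro w _
      conv_lhs => rw [hid v w]
      ring
    rw [hsum]
    have hQ' : 0 ≤ t * ∑ v, ∑ w, (if (v = w ∨ 0 < C v w) then (1:ℝ) else 0) * x v * x w :=
      mul_nonneg (le_of_lt htpos) hQ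
    have hx2 : 0 ≤ ∑ v, x v ^ 2 := Finset.sum_nonneg fun v _ => sq_nonneg _
    nlinarith [hrec]

open Matrix Finset in
private lemma eig_lb_stmt9 {V : Type*} [Fintype V] [DecidableEq V] (C : Matrix V V ℝ)
    (hC : C.IsHermitian)
    (M : ℝ) (hqf : ∀ x : V → ℝ, -(M * ∑ v, x v ^ 2) ≤ ∑ v, ∑ w, C v w * x v * x w)
    (i : V) : -M ≤ hC.eigenvalues i := by
  set u : EuclideanSpace ℝ V := hC.eigenvectorBasis i with hu
  have hnorm : ‖u‖ = 1 := hC.eigenvectorBasis.orthonormal.1 i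
  have hsq : ∑ v, u v ^ 2 = 1 := by
    have h2 : (inner ℝ u u : ℝ) = 1 := by
      rw [real_inner_self_eq_norm_sq, hnorm]; norm_num
    rw [PiLp.inner_apply] at h2
    simpa [pow_two] using h2
  have hm := hC.mulVec_eigenvectorBasis i
  have hqu := hqf (fun v => u v)
  have hform : ∑ v, ∑ w, C v w * u v * u w = hC.eigenvalues i := by
    have h1 : ∀ v, ∑ w, C v w * u v * u w = u v * (C *ᵥ (fun w => u w)) v := by
      intro v
      rw [Matrix.mulVec, dotProduct, Finset.mul_sum]
      exact Finset.sum_congr rfl fun w _ => by ring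
    rw [Finset.sum_congr rfl fun v _ => h1 v]
    have hm' : ∀ v, (C *ᵥ (fun w => u w)) v = hC.eigenvalues i * u v := by
      intro v
      have := congrFun hm v
      simpa using this
    rw [Finset.sum_congr rfl fun v _ => by rw [hm' v]]
    have h3 : ∑ v, u v * (hC.eigenvalues i * u v) = hC.eigenvalues i * ∑ v, u v ^ 2 := by
      rw [Finset.mul_sum]; exact Finset.sum_congr rfl fun v _ => by ring
    rw [h3, hsq, mul_one]
  rw [hform] at hqu
  rw [hsq] at hqu
  linarith [hqu]

open Matrix Finset in
private lemma trace_facts_stmt9 {V : Type*} [Fintype V] [DecidableEq V] (C : Matrix V V ℝ)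
    (hC : C.IsHermitian) :
    C.trace = ∑ i, hC.eigenvalues i ∧ (C * C).trace = ∑ i, hC.eigenvalues i ^ 2 := by
  have hU := (Matrix.mem_unitaryGroup_iff').mp (hC.eigenvectorUnitary).2
  constructor
  · conv_lhs => rw [hC.spectral_theorem, Unitary.conjStarAlgAut_apply]
    rw [Matrix.trace_mul_cycle, hU]
    simp [Matrix.trace_diagonal]
  · conv_lhs => rw [hC.spectral_theorem, Unitary.conjStarAlgAut_apply]
    rw [show ∀ (U D : Matrix V V ℝ), (U * D * star U) * (U * D * star U) = U * (D * (star U * U) * D) * star U by intros; noncomm_ring]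
    rw [hU]
    rw [Matrix.trace_mul_cycle, ← Matrix.mul_assoc, hU]
    simp [Matrix.diagonal_mul_diagonal, Matrix.trace_diagonal, pow_two]

/-- If the energy of such a matrix attains the bound 2(n−1)M with M > 0, then
the matrix equals M(J − I). -/
theorem stmt_9 {V : Type*} [Fintype V] [DecidableEq V] (hcard : 1 < Fintype.card V)
    (C : Matrix V V ℝ) (hC : C.IsHermitian)
    (hdiag : ∀ v : V, C v v = 0) (hnn : ∀ v w : V, 0 ≤ C v w)
    (hGH : ∀ x y z : V, x ≠ y → y ≠ z → x ≠ z → min (C x y) (C y z) ≤ C x z)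
    (M : ℝ) (hM : IsGreatest {t | ∃ v w : V, C v w = t} M) (hMpos : 0 < M)
    (henergy : ∑ i, |hC.eigenvalues i| = 2 * ((Fintype.card V : ℝ) - 1) * M) :
    ∀ v w : V, C v w = if v = w then 0 else M := by
  classical
  set n := Fintype.card V with hn
  set μ := hC.eigenvalues with hμ
  have hsymm : ∀ v w : V, C v w = C w v := by
    intro v w
    have h := hC.apply w v
    simpa using h
  have hub : ∀ v w : V, C v w ≤ M := fun v w => hM.2 ⟨v, w, rfl⟩
  -- quadratic form bound
  have hqf := qf_lb_stmt9 ((Finset.univ.image (fun p : V × V => C p.1 p.2)).filter (fun t => 0 < t)).card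
      C M (le_refl _) hsymm hdiag hnn hGH hub (le_of_lt hMpos)
  have h3 : ∀ i, -M ≤ μ i := fun i => eig_lb_stmt9 C hC M hqf i
  obtain ⟨htr, htr2⟩ := trace_facts_stmt9 C hC
  have htr0 : ∑ i, μ i = 0 := by
    rw [← htr, Matrix.trace]
    simp only [Matrix.diag]
    exact Finset.sum_eq_zero fun v _ => hdiag v
  have htrsq : ∑ i, μ i ^ 2 = ∑ v, ∑ w, C v w ^ 2 := by
    rw [← htr2, Matrix.trace]
    simp only [Matrix.diag, Matrix.mul_apply]
    apply Finset.sum_congr rfl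
    intro v _
    apply Finset.sum_congr rfl
    intro w _
    rw [hsymm w v, pow_two]
  -- spectral pinning
  set Neg := Finset.univ.filter (fun i => μ i < 0) with hNeg
  set NegC := Finset.univ.filter (fun i => ¬ μ i < 0) with hNegC
  have hn2 : 2 ≤ n := hcard
  have hn1R : (1:ℝ) ≤ (n:ℝ) - 1 := by
    have : (2:ℝ) ≤ (n:ℝ) := by exact_mod_cast hn2
    linarith
  have habs : ∀ i, |μ i| - μ i = if μ i < 0 then (-μ i) * 2 else 0 := by
    intro i
    by_cases h : μ i < 0
    · rw [if_pos h, abs_of_neg h]; ring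
    · rw [if_neg h, abs_of_nonneg (not_lt.mp h)]; ring
  have hsumneg : ∑ i ∈ Neg, (-μ i) = ((n:ℝ) - 1) * M := by
    have h1 : ∑ i ∈ Neg, (-μ i) * 2 = ∑ i, (|μ i| - μ i) := by
      rw [hNeg, Finset.sum_filter]
      exact Finset.sum_congr rfl fun i _ => (habs i).symm
    have h2 : ∑ i, (|μ i| - μ i) = 2 * ((n:ℝ) - 1) * M := by
      rw [Finset.sum_sub_distrib, htr0, henergy]; ring
    have h3' : (∑ i ∈ Neg, (-μ i)) * 2 = 2 * ((n:ℝ) - 1) * M := by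
      rw [Finset.sum_mul]; rw [h1]; exact h2
    linarith
  have hNegub : ∀ i ∈ Neg, -μ i ≤ M := fun i _ => by linarith [h3 i]
  have hcge : (n:ℝ) - 1 ≤ (Neg.card : ℝ) := by
    have hc1 : ((n:ℝ) - 1) * M ≤ (Neg.card : ℝ) * M := by
      calc ((n:ℝ)-1)*M = ∑ i ∈ Neg, (-μ i) := hsumneg.symm
        _ ≤ ∑ i ∈ Neg, M := Finset.sum_le_sum hNegub
        _ = (Neg.card : ℝ) * M := by rw [Finset.sum_const, nsmul_eq_mul]
    exact le_of_mul_le_mul_right hc1 hMpos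
  have hsplitsum : ∑ i ∈ Neg, μ i + ∑ i ∈ NegC, μ i = 0 := by
    rw [hNeg, hNegC, Finset.sum_filter_add_sum_filter_not]; exact htr0
  have hsumposC : ∑ i ∈ NegC, μ i = ((n:ℝ) - 1) * M := by
    have hneg : ∑ i ∈ Neg, μ i = -(((n:ℝ) - 1) * M) := by
      have h4 : ∑ i ∈ Neg, (-μ i) = -∑ i ∈ Neg, μ i := by
        rw [Finset.sum_neg_distrib]
      rw [h4] at hsumneg; linarith
    linarith
  have hNegC_ne : NegC.Nonempty := by
    by_contra h
    rw [Finset.not_nonempty_iff_eq_empty] at h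
    rw [h, Finset.sum_empty] at hsumposC
    nlinarith
  have hcardsplit : Neg.card + NegC.card = n := by
    rw [hNeg, hNegC, Finset.card_filter_add_card_filter_not, Finset.card_univ]
  have hNegC_pos : 1 ≤ NegC.card := Finset.card_pos.mpr hNegC_ne
  have hcard_le : Neg.card ≤ n - 1 := by omega
  have hcge' : n - 1 ≤ Neg.card := by
    have hc : ((n - 1 : ℕ) : ℝ) ≤ (Neg.card : ℝ) := by
      rw [Nat.cast_sub (by omega : 1 ≤ n)]; push_cast; linarith
    exact_mod_cast hc
  have hcardNeg : Neg.card = n - 1 := le_antisymm hcard_le hcge'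
  have hcardNegR : (Neg.card : ℝ) = (n:ℝ) - 1 := by
    rw [hcardNeg, Nat.cast_sub (by omega : 1 ≤ n)]; push_cast; ring
  have hall : ∀ i ∈ Neg, μ i = -M := by
    by_contra h
    push_neg at h
    obtain ⟨i₀, hi₀, hnei⟩ := h
    have hlt : ∑ i ∈ Neg, (-μ i) < ∑ i ∈ Neg, M := by
      apply Finset.sum_lt_sum hNegub
      exact ⟨i₀, hi₀, lt_of_le_of_ne (by linarith [h3 i₀])
        (fun he => hnei (by linarith))⟩
    rw [Finset.sum_const, nsmul_eq_mul, hcardNegR, hsumneg] at hlt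
    linarith
  have hc1 : NegC.card = 1 := by omega
  obtain ⟨i₀, hi₀⟩ := Finset.card_eq_one.mp hc1
  have hmu0 : μ i₀ = ((n:ℝ) - 1) * M := by
    rw [hi₀, Finset.sum_singleton] at hsumposC; exact hsumposC
  have hsqsum : ∑ i, μ i ^ 2 = ((n:ℝ) * n - n) * M ^ 2 := by
    rw [← Finset.sum_filter_add_sum_filter_not Finset.univ (fun i => μ i < 0) (fun i => μ i ^ 2)]
    rw [← hNeg, ← hNegC]
    have hA : ∑ i ∈ Neg, μ i ^ 2 = ∑ i ∈ Neg, M ^ 2 :=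
      Finset.sum_congr rfl (fun i hi => by rw [hall i hi]; ring)
    have hB : ∑ i ∈ NegC, μ i ^ 2 = (((n:ℝ) - 1) * M) ^ 2 := by
      rw [hi₀, Finset.sum_singleton, hmu0]
    rw [hA, hB, Finset.sum_const, nsmul_eq_mul, hcardNegR]
    ring
  -- conclude entries
  intro v w
  by_cases hvw : v = w
  · rw [if_pos hvw, hvw, hdiag]
  · rw [if_neg hvw]
    by_contra hnev
    have hlt : C v w < M := lt_of_le_of_ne (hub v w) hnev
    have hstrict : ∑ p ∈ ((Finset.univ ×ˢ Finset.univ : Finset (V × V))), (C p.1 p.2) ^ 2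
        < ∑ p ∈ ((Finset.univ ×ˢ Finset.univ : Finset (V × V))), (if p.1 = p.2 then (0:ℝ) else M ^ 2) := by
      apply Finset.sum_lt_sum
      · intro p _
        by_cases h : p.1 = p.2
        · rw [if_pos h, h, hdiag]; norm_num
        · rw [if_neg h]
          have h1 := hub p.1 p.2
          have h2 := hnn p.1 p.2
          nlinarith
      · refine ⟨(v, w), Finset.mem_product.mpr ⟨Finset.mem_univ _, Finset.mem_univ _⟩, ?_⟩
        rw [if_neg hvw]
        have h2 := hnn v w
        nlinarith
    have hL : ∑ p ∈ ((Finset.univ ×ˢ Finset.univ : Finset (V × V))), (C p.1 p.2) ^ 2 = ∑ i, μ i ^ 2 := by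
      rw [Finset.sum_product, ← htrsq]
    have hR : ∑ p ∈ ((Finset.univ ×ˢ Finset.univ : Finset (V × V))), (if p.1 = p.2 then (0:ℝ) else M ^ 2)
        = ((n:ℝ) * n - n) * M ^ 2 := by
      rw [Finset.sum_product]
      have hinner : ∀ a : V, ∑ b, (if a = b then (0:ℝ) else M ^ 2) = (n:ℝ) * M ^ 2 - M ^ 2 := by
        intro a
        have hsp : ∀ b, (if a = b then (0:ℝ) else M ^ 2)
            = M ^ 2 - (if a = b then M ^ 2 else 0) := by
          intro b; split <;> ring
        rw [Finset.sum_congr rfl (fun b _ => hsp b), Finset.sum_sub_distrib,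
          Finset.sum_const, Finset.sum_ite_eq, if_pos (Finset.mem_univ a),
          Finset.card_univ, nsmul_eq_mul]
      rw [Finset.sum_congr rfl fun a _ => hinner a, Finset.sum_const,
        Finset.card_univ, nsmul_eq_mul]
      ring
    rw [hL, hsqsum, hR] at hstrict
    exact lt_irrefl _ hstrict
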